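/- Let N ≥ 2 and 1 ≤ k ≤ N−1. Let X and Y be N×N traceless skew-Hermitian complex matrices such that every eigenvalue α of the Hermitian matrix −iX satisfies |α| < 1/(100N), every eigenvalue β of −iY satisfies −2πk/N < β < 2π(N−k)/N, and exp(Y) = e^{−2πik/N}·exp(X). Then −iX has exactly k negative eigenvalues and exactly N−k positive eigenvalues, counted with multiplicity (in particular 0 is not an eigenvalue of X). -/

import Mathlib

open Matrix Polynomial

lemma aux_charpoly_conj {n : ℕ} (u : (Matrix (Fin n) (Fin n) ℂ)ˣ) (A : Matrix (Fin n) (Fin n) ℂ) :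
    Matrix.charpoly ((u : Matrix (Fin n) (Fin n) ℂ) * A * ((↑u⁻¹ : Matrix (Fin n) (Fin n) ℂ))) = A.charpoly := by
  let f : Matrix (Fin n) (Fin n) ℂ →+* Matrix (Fin n) (Fin n) ℂ[X] :=
    (RingHom.mapMatrix (C : ℂ →+* ℂ[X]))
  have hch : ∀ M : Matrix (Fin n) (Fin n) ℂ, charmatrix M = Matrix.scalar (Fin n) X - f M := by
    intro M; rw [charmatrix]
  have key : charmatrix ((u : Matrix (Fin n) (Fin n) ℂ) * A * (↑u⁻¹ : Matrix (Fin n) (Fin n) ℂ))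
      = f u * charmatrix A * f ↑u⁻¹ := by
    rw [hch, hch, mul_sub, sub_mul, _root_.map_mul, _root_.map_mul]
    congr 1
    rw [mul_assoc, scalar_commute X (fun r => Commute.all _ _) _, ← mul_assoc,
      ← RingHom.map_mul f, u.mul_inv, RingHom.map_one f, one_mul]
  have h1 : (f ↑u).det * (f ↑u⁻¹).det = 1 := by
    rw [← det_mul, ← RingHom.map_mul f, u.mul_inv, RingHom.map_one f, det_one]
  unfold Matrix.charpoly
  rw [key, det_mul, det_mul, mul_right_comm, h1, one_mul]

lemma aux_charpoly_diagonal {n : ℕ} (d : Fin n → ℂ) :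
    (Matrix.diagonal d).charpoly = ∏ i, (X - C (d i)) := by
  unfold Matrix.charpoly
  have : charmatrix (Matrix.diagonal d) = Matrix.diagonal (fun i => (X : ℂ[X]) - C (d i)) := by
    ext i j
    by_cases h : i = j
    · subst h; simp [charmatrix_apply_eq]
    · simp [charmatrix_apply_ne _ _ _ h, Matrix.diagonal_apply_ne _ h, Matrix.diagonal_apply_ne d h]
  rw [this, det_diagonal]

lemma aux_roots_diagonal {n : ℕ} (d : Fin n → ℂ) :
    (Matrix.diagonal d).charpoly.roots = Finset.univ.val.map d := by
  rw [aux_charpoly_diagonal]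
  have := Polynomial.roots_multiset_prod_X_sub_C (Finset.univ.val.map d)
  rw [Multiset.map_map] at this
  rw [← this]
  rfl

lemma aux_smul_diag {n : ℕ} (c : ℂ) (d : Fin n → ℂ) :
    c • Matrix.diagonal d = Matrix.diagonal (fun i => c * d i) := by
  ext i j
  by_cases h : i = j
  · subst h; simp [Matrix.diagonal_apply_eq]
  · simp [Matrix.diagonal_apply_ne _ h]

lemma aux_smul_conj {n : ℕ} (c : ℂ) (M D N : Matrix (Fin n) (Fin n) ℂ) :
    c • (M * D * N) = M * (c • D) * N := by
  rw [Matrix.mul_smul, Matrix.smul_mul]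

lemma aux_exp_roots {n : ℕ} {A : Matrix (Fin n) (Fin n) ℂ} (hA : A.IsHermitian) (c : ℂ) :
    (c • NormedSpace.exp (Complex.I • A)).charpoly.roots
      = Finset.univ.val.map (fun i => c * Complex.exp (Complex.I * (hA.eigenvalues i))) := by
  have spectral := hA.spectral_theorem
  set U := hA.eigenvectorUnitary with hU
  let u : (Matrix (Fin n) (Fin n) ℂ)ˣ := Unitary.toUnits U
  have hu : (↑u : Matrix (Fin n) (Fin n) ℂ) = ↑U := rfl
  have hui : (↑u⁻¹ : Matrix (Fin n) (Fin n) ℂ) = star (↑U : Matrix (Fin n) (Fin n) ℂ) := by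
    rw [show u⁻¹ = Unitary.toUnits U⁻¹ from (map_inv (Unitary.toUnits) U).symm]
    rfl
  have h1 : Complex.I • A
      = (↑u : Matrix (Fin n) (Fin n) ℂ) * Matrix.diagonal
          (fun i => Complex.I * ((hA.eigenvalues i : ℝ) : ℂ)) * (↑u⁻¹ : Matrix (Fin n) (Fin n) ℂ) := by
    rw [hu, hui]
    conv_lhs => rw [spectral, Unitary.conjStarAlgAut_apply]
    rw [aux_smul_conj, aux_smul_diag]
    rfl
  have h2 : c • NormedSpace.exp (Complex.I • A)
      = (↑u : Matrix (Fin n) (Fin n) ℂ) * Matrix.diagonal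
          (fun i => c * Complex.exp (Complex.I * ((hA.eigenvalues i : ℝ) : ℂ)))
          * (↑u⁻¹ : Matrix (Fin n) (Fin n) ℂ) := by
    rw [h1, Matrix.exp_units_conj u, Matrix.exp_diagonal, aux_smul_conj, aux_smul_diag]
    congr 2
    funext i
    rw [Pi.exp_def, Complex.exp_eq_exp_ℂ]
  rw [h2, aux_charpoly_conj u, aux_roots_diagonal]

lemma aux_trace_eq {n : ℕ} {A : Matrix (Fin n) (Fin n) ℂ} (hA : A.IsHermitian) :
    A.trace = ∑ i, ((hA.eigenvalues i : ℝ) : ℂ) := by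
  conv_lhs => rw [hA.spectral_theorem, Unitary.conjStarAlgAut_apply]
  rw [Matrix.trace_mul_cycle, Unitary.coe_star_mul_self, one_mul, Matrix.trace_diagonal]
  rfl

lemma aux_exp_eq {a b : ℝ}
    (h : Complex.exp (Complex.I * a) = Complex.exp (Complex.I * b)) :
    ∃ m : ℤ, a = b + 2 * Real.pi * m := by
  obtain ⟨m, hm⟩ := Complex.exp_eq_exp_iff_exists_int.mp h
  refine ⟨m, ?_⟩
  have h2 := congrArg Complex.im hm
  simp at h2
  linarith

lemma aux_exp_eq' (a b : ℝ) (m : ℤ) (h : a = b + 2 * Real.pi * m) :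
    Complex.exp (Complex.I * a) = Complex.exp (Complex.I * b) := by
  apply Complex.exp_eq_exp_iff_exists_int.mpr ⟨m, ?_⟩
  rw [h]; push_cast; ring

lemma aux_int_small (d : ℤ) (h1 : -(1:ℝ) < 2*Real.pi*d) (h2 : 2*Real.pi*d < 1) : d = 0 := by
  have hpi := Real.pi_gt_three
  by_contra h0
  rcases lt_or_gt_of_ne h0 with h|h
  · have : (d:ℝ) ≤ -1 := by exact_mod_cast (show d ≤ -1 by omega)
    nlinarith
  · have : (1:ℝ) ≤ (d:ℝ) := by exact_mod_cast h
    nlinarith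

lemma aux_int_01 (d : ℤ) (h1 : -(1:ℝ) < 2*Real.pi*d) (h2 : 2*Real.pi*d < 2*Real.pi + 1) :
    d = 0 ∨ d = 1 := by
  have hpi := Real.pi_gt_three
  have hd0 : 0 ≤ d := by
    by_contra h
    push_neg at h
    have : (d:ℝ) ≤ -1 := by exact_mod_cast (show d ≤ -1 by omega)
    nlinarith
  have hd1 : d ≤ 1 := by
    by_contra h
    push_neg at h
    have : (2:ℝ) ≤ (d:ℝ) := by exact_mod_cast h
    nlinarith
  omega

/-- The spectral counting step in the paper's computation of `Σ_k = 𝔖|_{G×(-2πe_k)}`: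
if all eigenvalues of `-iX` are smaller than `1/(100N)` in absolute value, all
eigenvalues of `-iY` lie in `(-2πk/N, 2π(N-k)/N)`, and `e^Y = e^{-2πik/N}·e^X`, then
`-iX` has exactly `k` negative and `N - k` positive eigenvalues (with multiplicity). -/
theorem stmt16 (N k : ℕ) (hN : 2 ≤ N) (hk1 : 1 ≤ k) (hk : k ≤ N - 1)
    (X Y : Matrix (Fin N) (Fin N) ℂ)
    (hXtr : X.trace = 0) (hYtr : Y.trace = 0)
    (hX : ((-Complex.I) • X).IsHermitian) (hY : ((-Complex.I) • Y).IsHermitian)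
    (hXs : ∀ j, |hX.eigenvalues j| < 1 / (100 * (N : ℝ)))
    (hYs : ∀ j, -(2 * Real.pi * (k : ℝ) / (N : ℝ)) < hY.eigenvalues j ∧
      hY.eigenvalues j < 2 * Real.pi * ((N : ℝ) - (k : ℝ)) / (N : ℝ))
    (hexp : NormedSpace.exp Y =
      Complex.exp (((-(2 * Real.pi * (k : ℝ) / (N : ℝ)) : ℝ) : ℂ) * Complex.I) •
        NormedSpace.exp X) :
    (Finset.univ.filter fun j : Fin N => hX.eigenvalues j < 0).card = k ∧
    (Finset.univ.filter fun j : Fin N => 0 < hX.eigenvalues j).card = N - k := by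
  classical
  have hpi := Real.pi_gt_three
  have hpipos := Real.pi_pos
  have hNR : (2:ℝ) ≤ (N:ℝ) := by exact_mod_cast hN
  have hNpos : (0:ℝ) < (N:ℝ) := by linarith
  have hNne : (N:ℝ) ≠ 0 := ne_of_gt hNpos
  have hkR : (1:ℝ) ≤ (k:ℝ) := by exact_mod_cast hk1
  set α := hX.eigenvalues with hαdef
  set β := hY.eigenvalues with hβdef
  set θ : ℝ := 2 * Real.pi * (k : ℝ) / (N : ℝ) with hθdef
  set ε : ℝ := 1 / (100 * (N : ℝ)) with hεdef
  set c : ℂ := Complex.exp (((-θ : ℝ) : ℂ) * Complex.I) with hcdef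
  have hεpos : 0 < ε := by rw [hεdef]; positivity
  have hεsmall : ε ≤ 1/200 := by
    rw [hεdef, div_le_div_iff₀ (by linarith) (by norm_num)]
    linarith
  have hθpos : 0 < θ := by
    rw [hθdef]
    apply div_pos (by nlinarith) hNpos
  have hβub : ∀ j, β j < 2 * Real.pi - θ := by
    intro j
    have h2 := (hYs j).2
    have heq : 2 * Real.pi * ((N:ℝ) - (k:ℝ)) / (N:ℝ) = 2 * Real.pi - θ := by
      rw [hθdef]; field_simp
    linarith
  have hβlb : ∀ j, -θ < β j := fun j => (hYs j).1
  -- sums of eigenvalues vanish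
  have hαsum : ∑ i, α i = 0 := by
    have h := aux_trace_eq hX
    rw [Matrix.trace_smul, hXtr, smul_zero] at h
    exact_mod_cast h.symm
  have hβsum : ∑ j, β j = 0 := by
    have h := aux_trace_eq hY
    rw [Matrix.trace_smul, hYtr, smul_zero] at h
    exact_mod_cast h.symm
  -- roots of the characteristic polynomials
  have hx' : Complex.I • ((-Complex.I) • X) = X := by
    rw [smul_smul, mul_neg, Complex.I_mul_I, neg_neg, one_smul]
  have hy' : Complex.I • ((-Complex.I) • Y) = Y := by
    rw [smul_smul, mul_neg, Complex.I_mul_I, neg_neg, one_smul]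
  have e1 : (NormedSpace.exp Y).charpoly.roots
      = Finset.univ.val.map (fun j => Complex.exp (Complex.I * (β j))) := by
    have h := aux_exp_roots hY 1
    rw [hy', one_smul] at h
    simp only [one_mul] at h
    exact h
  have e2 : (c • NormedSpace.exp X).charpoly.roots
      = Finset.univ.val.map (fun i => c * Complex.exp (Complex.I * (α i))) := by
    have h := aux_exp_roots hX c
    rw [hx'] at h
    exact h
  have key : Finset.univ.val.map (fun j => Complex.exp (Complex.I * ((β j : ℝ) : ℂ)))
      = Finset.univ.val.map (fun i => c * Complex.exp (Complex.I * ((α i : ℝ) : ℂ))) := by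
    rw [← e1, ← e2, hexp]
  have hce : ∀ a : ℝ, c * Complex.exp (Complex.I * (a : ℂ))
      = Complex.exp (Complex.I * ((a - θ : ℝ) : ℂ)) := by
    intro a
    rw [hcdef, ← Complex.exp_add]
    congr 1
    push_cast
    ring
  -- memberships
  have mem1 : ∀ j, ∃ i, Complex.exp (Complex.I * ((β j : ℝ) : ℂ))
      = c * Complex.exp (Complex.I * ((α i : ℝ) : ℂ)) := by
    intro j
    have hmem : Complex.exp (Complex.I * ((β j : ℝ) : ℂ))
        ∈ Finset.univ.val.map (fun i => c * Complex.exp (Complex.I * ((α i : ℝ) : ℂ))) := by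
      rw [← key]
      exact Multiset.mem_map_of_mem _ (Finset.mem_val.mpr (Finset.mem_univ j))
    obtain ⟨i, _, hi⟩ := Multiset.mem_map.mp hmem
    exact ⟨i, hi.symm⟩
  have mem2 : ∀ i, ∃ j, c * Complex.exp (Complex.I * ((α i : ℝ) : ℂ))
      = Complex.exp (Complex.I * ((β j : ℝ) : ℂ)) := by
    intro i
    have hmem : c * Complex.exp (Complex.I * ((α i : ℝ) : ℂ))
        ∈ Finset.univ.val.map (fun j => Complex.exp (Complex.I * ((β j : ℝ) : ℂ))) := by
      rw [key]
      exact Multiset.mem_map_of_mem _ (Finset.mem_val.mpr (Finset.mem_univ i))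
    obtain ⟨j, _, hj⟩ := Multiset.mem_map.mp hmem
    exact ⟨j, hj.symm⟩
  -- choice of pairings
  have step1 : ∀ j, ∃ (i : Fin N) (m : ℤ), (m = 0 ∨ m = 1)
      ∧ β j = α i - θ + 2 * Real.pi * m := by
    intro j
    obtain ⟨i, hi⟩ := mem1 j
    rw [hce (α i)] at hi
    obtain ⟨m, hm⟩ := aux_exp_eq hi
    have habs := abs_lt.mp (hXs i)
    have hm01 : m = 0 ∨ m = 1 := by
      apply aux_int_01
      · have := hβlb j; linarith
      · have := hβub j; linarith
    exact ⟨i, m, hm01, by linarith⟩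
  choose g m hm01 hβeq using step1
  have hsign : ∀ j, (m j = 1 → -ε < α (g j) ∧ α (g j) < 0) ∧ (m j = 0 → 0 < α (g j)) := by
    intro j
    have hb := hβeq j
    have habs := abs_lt.mp (hXs (g j))
    constructor
    · intro h1
      rw [h1] at hb
      push_cast at hb
      have := hβub j
      exact ⟨habs.1, by linarith⟩
    · intro h0
      rw [h0] at hb
      push_cast at hb
      have := hβlb j
      linarith
  -- the total winding number is k
  have hMk : ∑ j, m j = (k : ℤ) := by
    have hsum : (0:ℝ) = ∑ j, (α (g j) - θ + 2 * Real.pi * (m j : ℝ)) := by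
      rw [← hβsum]
      exact Finset.sum_congr rfl (fun j _ => hβeq j)
    have hexpand : ∑ j, (α (g j) - θ + 2 * Real.pi * (m j : ℝ))
        = (∑ j, α (g j)) - (N:ℝ) * θ + 2 * Real.pi * (∑ j, (m j : ℝ)) := by
      rw [Finset.sum_add_distrib, Finset.sum_sub_distrib, Finset.sum_const, Finset.card_univ,
        Fintype.card_fin, ← Finset.mul_sum, nsmul_eq_mul]
    have hNθ : (N:ℝ) * θ = 2 * Real.pi * (k:ℝ) := by
      rw [hθdef]; field_simp
    have hSb : |∑ j, α (g j)| ≤ 1/100 := by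
      calc |∑ j, α (g j)| ≤ ∑ j, |α (g j)| := Finset.abs_sum_le_sum_abs _ _
        _ ≤ ∑ _j : Fin N, ε := Finset.sum_le_sum (fun j _ => le_of_lt (hXs (g j)))
        _ = (N:ℝ) * ε := by
            rw [Finset.sum_const, Finset.card_univ, Fintype.card_fin, nsmul_eq_mul]
        _ = 1/100 := by rw [hεdef]; field_simp
    have habs := abs_le.mp hSb
    have heq : 2 * Real.pi * ((∑ j, ((m j : ℤ) : ℝ)) - (k:ℝ)) = -(∑ j, α (g j)) := by
      have h1 := hsum.trans hexpand
      linarith [h1, hNθ]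
    have hd : ((∑ j, m j) - (k:ℤ)) = 0 := by
      apply aux_int_small <;>
      · have hcast : (((∑ j, m j) - (k:ℤ) : ℤ) : ℝ) = (∑ j, ((m j : ℤ) : ℝ)) - (k:ℝ) := by
          push_cast; ring
        rw [hcast]
        linarith [heq, habs.1, habs.2]
    omega
  -- the counting predicate
  set P : ℂ → Prop := fun z => ∃ t : ℝ, -ε < t ∧ t < 0
    ∧ z = c * Complex.exp (Complex.I * (t : ℂ)) with hPdef
  have hPβ : ∀ j, P (Complex.exp (Complex.I * ((β j : ℝ) : ℂ))) ↔ m j = 1 := by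
    intro j
    constructor
    · rintro ⟨t, ht1, ht2, hz⟩
      rw [hce t] at hz
      obtain ⟨m', hm'⟩ := aux_exp_eq hz
      have hb := hβeq j
      have habs := abs_lt.mp (hXs (g j))
      have heq2 : 2 * Real.pi * ((m' : ℝ) - ((m j : ℤ) : ℝ)) = α (g j) - t := by
        linarith [hm', hb]
      have hd : m' - m j = 0 := by
        apply aux_int_small <;>
        · have hcast : ((m' - m j : ℤ) : ℝ) = (m' : ℝ) - ((m j : ℤ) : ℝ) := by push_cast; ring
          rw [hcast]
          linarith [heq2, habs.1, habs.2]
      have hm'm : (m' : ℝ) = ((m j : ℤ) : ℝ) := by exact_mod_cast (show m' = m j by omega)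
      have hαt : α (g j) = t := by
        rw [hm'm, sub_self, mul_zero] at heq2
        linarith [heq2]
      rcases hm01 j with h0 | h1
      · exfalso
        have := (hsign j).2 h0
        linarith
      · exact h1
    · intro h1
      obtain ⟨hlt, hneg⟩ := (hsign j).1 h1
      refine ⟨α (g j), hlt, hneg, ?_⟩
      rw [hce (α (g j))]
      apply aux_exp_eq' _ _ 1
      have hb := hβeq j
      rw [h1] at hb
      push_cast at hb ⊢
      linarith
  have hPα : ∀ i, P (c * Complex.exp (Complex.I * ((α i : ℝ) : ℂ))) ↔ α i < 0 := by
    intro i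
    constructor
    · rintro ⟨t, ht1, ht2, hz⟩
      rw [hce t, hce (α i)] at hz
      obtain ⟨m', hm'⟩ := aux_exp_eq hz
      have habs := abs_lt.mp (hXs i)
      have hd : m' = 0 := by
        apply aux_int_small <;> linarith [hm', habs.1, habs.2]
      rw [hd] at hm'
      push_cast at hm'
      linarith
    · intro h
      exact ⟨α i, (abs_lt.mp (hXs i)).1, h, rfl⟩
  -- transfer the count
  have hcount := congrArg (Multiset.countP P) key
  rw [Multiset.countP_map, Multiset.countP_map] at hcount
  have hleft : Multiset.card (Multiset.filter
      (fun j => P (Complex.exp (Complex.I * ((β j : ℝ) : ℂ)))) Finset.univ.val) = k := by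
    rw [Multiset.filter_congr (fun j _ => hPβ j)]
    have h1 : Multiset.card (Multiset.filter (fun j => m j = 1) Finset.univ.val)
        = (Finset.univ.filter (fun j => m j = 1)).card := by
      rw [Finset.card, Finset.filter_val]
    rw [h1]
    have h2 : ((Finset.univ.filter (fun j => m j = 1)).card : ℤ) = (k : ℤ) := by
      rw [← Finset.sum_boole, ← hMk]
      apply Finset.sum_congr rfl
      intro j _
      rcases hm01 j with h | h <;> simp [h]
    exact_mod_cast h2
  have hright : Multiset.card (Multiset.filter
      (fun i => P (c * Complex.exp (Complex.I * ((α i : ℝ) : ℂ)))) Finset.univ.val)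
      = (Finset.univ.filter (fun i => α i < 0)).card := by
    rw [Multiset.filter_congr (fun i _ => hPα i), Finset.card, Finset.filter_val]
  have hneg : (Finset.univ.filter (fun i => α i < 0)).card = k := by
    rw [← hright, ← hcount, hleft]
  -- no zero eigenvalues
  have hαne : ∀ i, α i ≠ 0 := by
    intro i
    obtain ⟨j, hj⟩ := mem2 i
    rw [hce (α i)] at hj
    obtain ⟨m', hm'⟩ := aux_exp_eq hj.symm
    have hb1 := hβlb j
    have hb2 := hβub j
    have habs := abs_lt.mp (hXs i)
    have hm01' : m' = 0 ∨ m' = 1 := by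
      apply aux_int_01 <;> linarith [hm', hb1, hb2, habs.1, habs.2, hεsmall]
    rcases hm01' with h | h <;> rw [h] at hm' <;> push_cast at hm' <;> intro hzero <;>
      rw [hzero] at hm' <;> linarith [hb1, hb2, hθpos, hpipos]
  refine ⟨hneg, ?_⟩
  have htot := Finset.card_filter_add_card_filter_not
    (s := (Finset.univ : Finset (Fin N))) (p := fun i => α i < 0)
  have hfe : Finset.univ.filter (fun i => ¬ α i < 0) = Finset.univ.filter (fun i => 0 < α i) := by
    apply Finset.filter_congr
    intro i _
    constructor
    · intro h
      exact lt_of_le_of_ne (not_lt.mp h) (Ne.symm (hαne i))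
    · intro h
      exact not_lt.mpr (le_of_lt h)
  rw [hfe, hneg, Finset.card_univ, Fintype.card_fin] at htot
  omega
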